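/- Let p > 3 be a prime with p ≡ 1 (mod 3), let k ∈ ZMod p with k ≠ 0, and suppose that the number N_p(k) of F_p-rational points (including the point at infinity) of the curve y² = x³ + k over F_p is a prime number. Then either k is neither a square nor a cube in ZMod p, or p = 7 and k = 4 in ZMod 7 (in which case N_7(4) = 3). -/

import Mathlib

open Finset Polynomial WeierstrassCurve WeierstrassCurve.Affine

/-- The number of `F_p`-rational points, including the point at infinity, of the elliptic curve
`y² = x³ + k` over `F_p`. -/
noncomputable def Npts (p : ℕ) (k : ZMod p) : ℕ :=
  Nat.card (WeierstrassCurve.Affine.Point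
    (WeierstrassCurve.toAffine ⟨0, 0, 0, 0, k⟩))

section Aux

lemma EC.some_congr {F : Type*} [Field F] {W : WeierstrassCurve.Affine F} {x₁ y₁ x₂ y₂ : F}
    (hx : x₁ = x₂) (hy : y₁ = y₂) (h₁ : W.Nonsingular x₁ y₁) (h₂ : W.Nonsingular x₂ y₂) :
    WeierstrassCurve.Affine.Point.some _ _ h₁ = WeierstrassCurve.Affine.Point.some _ _ h₂ := by
  subst hx; subst hy; rfl

variable (p : ℕ) [Fact p.Prime]

lemma EC.two_ne (hp3 : 3 < p) : (2 : ZMod p) ≠ 0 := by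
  have : ((2 : ℕ) : ZMod p) = 0 ↔ p ∣ 2 := ZMod.natCast_eq_zero_iff 2 p
  intro h
  have h2 : p ∣ 2 := this.mp (by exact_mod_cast h)
  have := Nat.le_of_dvd (by norm_num) h2
  omega

lemma EC.three_ne (hp3 : 3 < p) : (3 : ZMod p) ≠ 0 := by
  have : ((3 : ℕ) : ZMod p) = 0 ↔ p ∣ 3 := ZMod.natCast_eq_zero_iff 3 p
  intro h
  have h2 : p ∣ 3 := this.mp (by exact_mod_cast h)
  have := Nat.le_of_dvd (by norm_num) h2
  omega

lemma EC.delta_ne (hp3 : 3 < p) (k : ZMod p) (hk : k ≠ 0) :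
    (WeierstrassCurve.toAffine (⟨0, 0, 0, 0, k⟩ : WeierstrassCurve (ZMod p))).Δ ≠ 0 := by
  have h2 := EC.two_ne p hp3
  have h3 := EC.three_ne p hp3
  have : (WeierstrassCurve.toAffine (⟨0, 0, 0, 0, k⟩ : WeierstrassCurve (ZMod p))).Δ
      = -(2 ^ 4 * 3 ^ 3) * k ^ 2 := by
    simp [WeierstrassCurve.Δ, WeierstrassCurve.b₂, WeierstrassCurve.b₄, WeierstrassCurve.b₆,
      WeierstrassCurve.b₈, WeierstrassCurve.toAffine]
    ring
  rw [this]
  exact mul_ne_zero (neg_ne_zero.mpr (mul_ne_zero (pow_ne_zero _ h2) (pow_ne_zero _ h3)))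
    (pow_ne_zero _ hk)

lemma EC.equation_iff' (k : ZMod p) (x y : ZMod p) :
    (WeierstrassCurve.toAffine (⟨0, 0, 0, 0, k⟩ : WeierstrassCurve (ZMod p))).Equation x y
      ↔ y ^ 2 = x ^ 3 + k := by
  rw [WeierstrassCurve.Affine.equation_iff]
  constructor <;> intro h <;> linear_combination h

end Aux

lemma EC.char_ne_two (p : ℕ) [Fact p.Prime] (hp3 : 3 < p) : ringChar (ZMod p) ≠ 2 := by
  rw [ZMod.ringChar_zmod_n]; omega

lemma EC.npts_formula (p : ℕ) [Fact p.Prime] (hp3 : 3 < p) (k : ZMod p) (hk : k ≠ 0) :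
    (Npts p k : ℤ) = 1 + p + ∑ x : ZMod p, quadraticChar (ZMod p) (x ^ 3 + k) := by
  set W : WeierstrassCurve.Affine (ZMod p) := WeierstrassCurve.toAffine ⟨0, 0, 0, 0, k⟩ with hW
  have hΔ := EC.delta_ne p hp3 k hk
  have hEqn := EC.equation_iff' p k
  have hns : ∀ {x y : ZMod p}, y ^ 2 = x ^ 3 + k → W.Nonsingular x y :=
    fun h => (WeierstrassCurve.Affine.equation_iff_nonsingular_of_Δ_ne_zero (W := W) hΔ).mp ((hEqn _ _).mpr h)
  let e : W.Point ≃ Option {xy : ZMod p × ZMod p // xy.2 ^ 2 = xy.1 ^ 3 + k} :=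
  { toFun := fun P => match P with
      | .zero => none
      | @WeierstrassCurve.Affine.Point.some _ _ _ x y h =>
          some ⟨(x, y), (hEqn x y).mp ((W.nonsingular_iff x y).mp h).1⟩
    invFun := fun o => match o with
      | none => .zero
      | some ⟨(x, y), h⟩ => .some _ _ (hns h)
    left_inv := by rintro (_ | _) <;> rfl
    right_inv := by rintro (_ | ⟨⟨x, y⟩, h⟩) <;> rfl }
  have hcard : Npts p k = Fintype.card {xy : ZMod p × ZMod p // xy.2 ^ 2 = xy.1 ^ 3 + k} + 1 := by
    rw [Npts, ← hW, Nat.card_congr e, Nat.card_eq_fintype_card, Fintype.card_option]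
  have hfib : Fintype.card {xy : ZMod p × ZMod p // xy.2 ^ 2 = xy.1 ^ 3 + k}
      = ∑ x : ZMod p, Fintype.card {y : ZMod p // y ^ 2 = x ^ 3 + k} := by
    rw [Fintype.card_congr (Equiv.subtypeProdEquivSigmaSubtype
      (fun (x y : ZMod p) => y ^ 2 = x ^ 3 + k)), Fintype.card_sigma]
  have hpoint : ∀ a : ZMod p, (Fintype.card {y : ZMod p // y ^ 2 = a} : ℤ)
      = quadraticChar (ZMod p) a + 1 := by
    intro a
    rw [← quadraticChar_card_sqrts (EC.char_ne_two p hp3) a]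
    norm_cast
    rw [Set.toFinset_card]
    exact Fintype.card_congr (Equiv.setCongr rfl)
  rw [hcard]
  push_cast
  rw [hfib]
  push_cast
  rw [Finset.sum_congr rfl (fun x _ => hpoint (x ^ 3 + k)), Finset.sum_add_distrib]
  simp [ZMod.card]
  ring

lemma EC.two_dvd (p : ℕ) [Fact p.Prime] (hp3 : 3 < p) (k : ZMod p) (hk : k ≠ 0)
    (v : ZMod p) (hv : v ^ 3 = k) : 2 ∣ Npts p k := by
  set W : WeierstrassCurve.Affine (ZMod p) := WeierstrassCurve.toAffine ⟨0, 0, 0, 0, k⟩ with hW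
  have hΔ := EC.delta_ne p hp3 k hk
  have hEqn := EC.equation_iff' p k
  have hQ : W.Nonsingular (-v) 0 :=
    (WeierstrassCurve.Affine.equation_iff_nonsingular_of_Δ_ne_zero (W := W) hΔ).mp ((hEqn _ _).mpr (by linear_combination hv))
  set Q : W.Point := .some _ _ hQ with hQdef
  have hnegY : W.negY (-v) 0 = 0 := by
    simp [WeierstrassCurve.Affine.negY, hW, WeierstrassCurve.toAffine]
  have hQQ : Q + Q = 0 := WeierstrassCurve.Affine.Point.add_of_Y_eq rfl hnegY.symm
  have h2 : (2 : ℕ) • Q = 0 := by rw [two_nsmul]; exact hQQ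
  have hdvd : addOrderOf Q ∣ 2 := addOrderOf_dvd_of_nsmul_eq_zero h2
  have hne : addOrderOf Q ≠ 1 := fun h =>
    WeierstrassCurve.Affine.Point.some_ne_zero hQ (AddMonoid.addOrderOf_eq_one_iff.mp h)
  have : addOrderOf Q = 2 := by
    rcases (Nat.dvd_prime Nat.prime_two).mp hdvd with h | h
    · exact absurd h hne
    · exact h
  calc (2 : ℕ) = addOrderOf Q := this.symm
    _ ∣ Nat.card W.Point := addOrderOf_dvd_natCard Q
    _ = Npts p k := rfl

lemma EC.three_dvd (p : ℕ) [Fact p.Prime] (hp3 : 3 < p) (k : ZMod p) (hk : k ≠ 0)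
    (u : ZMod p) (hu : u ^ 2 = k) : 3 ∣ Npts p k := by
  set W : WeierstrassCurve.Affine (ZMod p) := WeierstrassCurve.toAffine ⟨0, 0, 0, 0, k⟩ with hW
  have hΔ := EC.delta_ne p hp3 k hk
  have hEqn := EC.equation_iff' p k
  have hu0 : u ≠ 0 := by rintro rfl; exact hk (by rw [← hu]; ring)
  have hP : W.Nonsingular 0 u :=
    (WeierstrassCurve.Affine.equation_iff_nonsingular_of_Δ_ne_zero (W := W) hΔ).mp ((hEqn _ _).mpr (by linear_combination hu))
  set P : W.Point := .some _ _ hP with hPdef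
  have hnegY : W.negY 0 u = -u := by
    simp [WeierstrassCurve.Affine.negY, hW, WeierstrassCurve.toAffine]
  have hyne : u ≠ W.negY 0 u := by
    rw [hnegY]
    intro h
    apply hu0
    have h2 : (2 : ZMod p) * u = 0 := by linear_combination h
    rcases mul_eq_zero.mp h2 with h' | h'
    · exact absurd h' (EC.two_ne p hp3)
    · exact h'
  have hslope : W.slope 0 0 u u = 0 := by
    rw [WeierstrassCurve.Affine.slope_of_Y_ne rfl hyne]
    simp [hW, WeierstrassCurve.toAffine]
  have hX : W.addX 0 0 (W.slope 0 0 u u) = 0 := by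
    rw [hslope]; simp [WeierstrassCurve.Affine.addX, hW, WeierstrassCurve.toAffine]
  have hY : W.addY 0 0 u (W.slope 0 0 u u) = -u := by
    rw [hslope]
    simp [WeierstrassCurve.Affine.addY, WeierstrassCurve.Affine.negAddY,
      WeierstrassCurve.Affine.negY, WeierstrassCurve.Affine.addX, hW, WeierstrassCurve.toAffine]
  have hPP : P + P = -P := by
    rw [hPdef, WeierstrassCurve.Affine.Point.add_of_Y_ne hyne,
      WeierstrassCurve.Affine.Point.neg_some]
    exact EC.some_congr hX (hY.trans hnegY.symm) _ _
  have h3 : (3 : ℕ) • P = 0 := by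
    have : P + P + P = 0 := by rw [hPP]; exact neg_add_cancel P
    rw [show (3 : ℕ) • P = P + P + P by rw [succ_nsmul, two_nsmul]]
    exact this
  have hdvd : addOrderOf P ∣ 3 := addOrderOf_dvd_of_nsmul_eq_zero h3
  have hne : addOrderOf P ≠ 1 := fun h =>
    WeierstrassCurve.Affine.Point.some_ne_zero hP (AddMonoid.addOrderOf_eq_one_iff.mp h)
  have : addOrderOf P = 3 := by
    rcases (Nat.dvd_prime Nat.prime_three).mp hdvd with h | h
    · exact absurd h hne
    · exact h
  calc (3 : ℕ) = addOrderOf P := this.symm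
    _ ∣ Nat.card W.Point := addOrderOf_dvd_natCard P
    _ = Npts p k := rfl

lemma EC.sum_sq_le (p : ℕ) [Fact p.Prime] (hp3 : 3 < p) (hpmod : p % 3 = 1)
    (k : ZMod p) (hk : k ≠ 0) :
    (∑ x : ZMod p, quadraticChar (ZMod p) (x ^ 3 + k)) ^ 2 ≤ 4 * p := by
  have hchar2 := EC.char_ne_two p hp3
  -- the quadratic character with values in ℂ
  set χ : MulChar (ZMod p) ℂ := (quadraticChar (ZMod p)).ringHomComp (Int.castRingHom ℂ) with hχdef
  have hχ1 : χ ≠ 1 :=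
    (MulChar.ringHomComp_ne_one_iff Int.cast_injective).mpr
      (quadraticChar_ne_one hchar2)
  have hχsq : χ * χ = 1 := by
    apply MulChar.ext
    intro a
    rw [MulChar.mul_apply, MulChar.one_apply_coe, hχdef]
    simp only [MulChar.ringHomComp_apply]
    rw [← map_mul, ← pow_two, quadraticChar_sq_one a.ne_zero, map_one]
  have hχinv : χ⁻¹ = χ := inv_eq_of_mul_eq_one_right hχsq
  -- a cubic character ψ with values in ℂ
  have h3card : (3 : ℕ) ∣ Fintype.card (ZMod p) - 1 := by rw [ZMod.card]; omega
  obtain ⟨ψ, hψord⟩ := MulChar.exists_mulChar_orderOf (ZMod p) h3card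
    (Complex.isPrimitiveRoot_exp 3 (by norm_num))
  have hψ3 : ψ ^ 3 = 1 := by rw [← hψord]; exact pow_orderOf_eq_one ψ
  have hψ1 : ψ ≠ 1 := by
    intro h
    rw [h, orderOf_one] at hψord
    norm_num at hψord
  have hψ2inv : ψ ^ 2 = ψ⁻¹ := by
    apply eq_inv_of_mul_eq_one_left
    rw [← pow_succ]
    exact hψ3
  -- values of characters at nonzero arguments
  have hψcube : ∀ a : ZMod p, a ≠ 0 → (ψ a) ^ 3 = 1 := by
    intro a ha
    rw [← MulChar.pow_apply' ψ (by norm_num) a, hψ3]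
    exact MulChar.one_apply_coe (isUnit_iff_ne_zero.mpr ha).unit
  -- a generator of the unit group
  obtain ⟨g, hg⟩ := IsCyclic.exists_generator (α := (ZMod p)ˣ)
  have hζu3 : (ψ (g : ZMod p)) ^ 3 = 1 := hψcube _ (Units.ne_zero g)
  have hζu1 : ψ (g : ZMod p) ≠ 1 := by
    intro h
    apply hψ1
    apply MulChar.ext
    intro a
    obtain ⟨n, hn⟩ := (Submonoid.mem_powers_iff _ _).mp
      ((mem_powers_iff_mem_zpowers).mpr (hg a))
    rw [← hn, MulChar.one_apply_coe, Units.val_pow_eq_pow_val, map_pow, h, one_pow]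
  have hζuord : orderOf (ψ (g : ZMod p)) = 3 := by
    rcases (Nat.dvd_prime Nat.prime_three).mp (orderOf_dvd_of_pow_eq_one hζu3) with h | h
    · exact absurd (orderOf_eq_one_iff.mp h) hζu1
    · exact h
  -- cube criterion
  have hcrit : ∀ t : ZMod p, t ≠ 0 → ψ t = 1 → ∃ s : ZMod p, s ^ 3 = t := by
    intro t ht h1
    obtain ⟨n, hn⟩ := (Submonoid.mem_powers_iff _ _).mp
      ((mem_powers_iff_mem_zpowers).mpr (hg (isUnit_iff_ne_zero.mpr ht).unit))
    have htval : (g : ZMod p) ^ n = t := by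
      rw [← Units.val_pow_eq_pow_val, hn, IsUnit.unit_spec]
    have hψt : (ψ (g : ZMod p)) ^ n = 1 := by
      rw [← map_pow, htval, h1]
    have h3n : 3 ∣ n := hζuord ▸ orderOf_dvd_iff_pow_eq_one.mpr hψt
    obtain ⟨j, rfl⟩ := h3n
    exact ⟨(g : ZMod p) ^ j, by rw [← pow_mul, mul_comm j 3]; exact htval⟩
  -- a primitive cube root of unity in ZMod p
  have hgord : orderOf g = p - 1 := by
    rw [orderOf_eq_card_of_forall_mem_zpowers hg, Nat.card_eq_fintype_card, ZMod.card_units]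
  have hζF : IsPrimitiveRoot ((g ^ ((p - 1) / 3) : (ZMod p)ˣ) : ZMod p) 3 := by
    rw [IsPrimitiveRoot.coe_units_iff]
    have hord : orderOf (g ^ ((p - 1) / 3)) = 3 := by
      rw [orderOf_pow, hgord, Nat.gcd_comm, Nat.gcd_eq_left ⟨3, by omega⟩]
      set m := (p - 1) / 3 with hm
      have hm0 : 0 < m := by omega
      have h3 : p - 1 = 3 * m := by omega
      rw [h3, mul_comm]; exact Nat.mul_div_cancel_left 3 hm0
    have := IsPrimitiveRoot.orderOf (g ^ ((p - 1) / 3))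
    rwa [hord] at this
  -- counting cube roots
  have hcount : ∀ t : ZMod p, ((univ.filter fun x : ZMod p => x ^ 3 = t).card : ℂ)
      = 1 + ψ t + ψ t ^ 2 := by
    intro t
    by_cases ht : t = 0
    · subst ht
      have : (univ.filter fun x : ZMod p => x ^ 3 = 0) = {0} := by
        ext x
        simp [pow_eq_zero_iff (three_ne_zero)]
      rw [this, MulChar.map_nonunit ψ (by simp)]
      simp
    · by_cases hcube : ∃ s : ZMod p, s ^ 3 = t
      · obtain ⟨s, hs⟩ := hcube
        have hs0 : s ≠ 0 := by rintro rfl; exact ht (by rw [← hs]; ring)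
        have hψt : ψ t = 1 := by
          rw [← hs, map_pow, ← MulChar.pow_apply' ψ (by norm_num), hψ3]
          exact MulChar.one_apply_coe (isUnit_iff_ne_zero.mpr hs0).unit
        rw [hψt]
        norm_num
        -- card = 3
        have hbij : (univ.filter fun x : ZMod p => x ^ 3 = t).card
            = (nthRootsFinset 3 (1 : ZMod p)).card := by
          apply Finset.card_bij (fun x _ => x * s⁻¹)
          · intro x hx
            simp only [mem_filter, mem_univ, true_and] at hx
            rw [Polynomial.mem_nthRootsFinset (by norm_num) (1 : ZMod p)]
            field_simp [hx, hs]
            rw [hx, hs]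
          · intro x hx y hy hxy
            exact mul_right_cancel₀ (inv_ne_zero hs0) hxy
          · intro w hw
            rw [Polynomial.mem_nthRootsFinset (by norm_num) (1 : ZMod p)] at hw
            refine ⟨w * s, ?_, by field_simp⟩
            simp only [mem_filter, mem_univ, true_and]
            rw [mul_pow, hw, one_mul, hs]
        rw [hbij, hζF.card_nthRootsFinset]
        norm_num
      · have hempty : (univ.filter fun x : ZMod p => x ^ 3 = t) = ∅ := by
          ext x
          simp only [mem_filter, mem_univ, true_and, Finset.notMem_empty, iff_false]
          exact fun h => hcube ⟨x, h⟩
        rw [hempty]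
        have hz3 : (ψ t) ^ 3 = 1 := hψcube t ht
        have hz1 : ψ t ≠ 1 := fun h => hcube (hcrit t ht h)
        have : (ψ t - 1) * (1 + ψ t + ψ t ^ 2) = 0 := by linear_combination hz3
        rcases mul_eq_zero.mp this with h | h
        · exact absurd (sub_eq_zero.mp h) hz1
        · simpa using h.symm
  -- the sums
  set T : ℤ := ∑ x : ZMod p, quadraticChar (ZMod p) (x ^ 3 + k) with hT
  set S : ℂ := ∑ x : ZMod p, χ (x ^ 3 + k) with hS
  have hST : S = (T : ℂ) := by
    rw [hS, hT]
    push_cast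
    refine Finset.sum_congr rfl fun x _ => ?_
    rw [hχdef, MulChar.ringHomComp_apply]
    simp
  have hfiber : S = ∑ t : ZMod p,
      ((univ.filter fun x : ZMod p => x ^ 3 = t).card : ℂ) * χ (t + k) := by
    rw [hS, ← Finset.sum_fiberwise univ (fun x : ZMod p => x ^ 3) (fun x => χ (x ^ 3 + k))]
    refine Finset.sum_congr rfl fun t _ => ?_
    have hcg : ∀ x ∈ univ.filter (fun x : ZMod p => x ^ 3 = t),
        χ (x ^ 3 + k) = χ (t + k) := by
      intro x hx
      rw [(Finset.mem_filter.mp hx).2]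
    rw [Finset.sum_congr rfl hcg, Finset.sum_const, nsmul_eq_mul]
  have hexpand : S = (∑ t : ZMod p, χ (t + k)) + ((∑ t : ZMod p, ψ t * χ (t + k))
      + (∑ t : ZMod p, (ψ ^ 2) t * χ (t + k))) := by
    rw [hfiber, ← Finset.sum_add_distrib, ← Finset.sum_add_distrib]
    refine Finset.sum_congr rfl fun t _ => ?_
    rw [hcount t, MulChar.pow_apply' ψ two_ne_zero]
    ring
  have hA : (∑ t : ZMod p, χ (t + k)) = 0 := by
    rw [Fintype.sum_equiv (Equiv.addRight k) (fun t => χ (t + k)) (fun s => χ s) (fun t => rfl)]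
    exact MulChar.sum_eq_zero_of_ne_one hχ1
  have hnk : -k ≠ 0 := neg_ne_zero.mpr hk
  have key : ∀ φ : MulChar (ZMod p) ℂ,
      (∑ t : ZMod p, φ t * χ (t + k)) = φ (-k) * χ k * jacobiSum φ χ := by
    intro φ
    rw [← Fintype.sum_equiv (Equiv.mulLeft₀ (-k) hnk)
      (fun x => φ (-k * x) * χ (-k * x + k)) (fun t => φ t * χ (t + k)) (fun x => rfl)]
    have harg : ∀ x : ZMod p, -k * x + k = k * (1 - x) := fun x => by ring
    simp only [harg, map_mul]
    rw [jacobiSum, Finset.mul_sum]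
    refine Finset.sum_congr rfl fun x _ => ?_
    ring
  have hψ2ne : ψ ^ 2 ≠ 1 := by
    intro h
    have hdvd : orderOf ψ ∣ 2 := orderOf_dvd_of_pow_eq_one h
    rw [hψord] at hdvd
    norm_num at hdvd
  have hψχ : ψ * χ ≠ 1 := by
    intro h
    apply hψ2ne
    have h2 : (ψ * χ) * (ψ * χ) = (ψ * ψ) * (χ * χ) := mul_mul_mul_comm ψ χ ψ χ
    rw [h, hχsq] at h2
    exact (pow_two ψ).trans ((mul_one (ψ * ψ)).symm.trans (h2.symm.trans (one_mul 1)))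
  set J : ℂ := jacobiSum ψ χ with hJ
  have hcharne : ringChar ℂ ≠ ringChar (ZMod p) := by
    rw [ringChar.eq_zero, ZMod.ringChar_zmod_n]
    omega
  have hJJ : J * jacobiSum ψ⁻¹ χ⁻¹ = (p : ℂ) := by
    rw [hJ, jacobiSum_mul_jacobiSum_inv hcharne hψ1 hχ1 hψχ, ZMod.card]
  have hψconj : ψ.ringHomComp (starRingEnd ℂ) = ψ⁻¹ := by
    apply MulChar.ext
    intro a
    rw [MulChar.ringHomComp_apply, MulChar.inv_apply_eq_inv']
    have habs : ‖ψ (a : ZMod p)‖ = 1 :=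
      Complex.norm_eq_one_of_pow_eq_one (hψcube _ a.ne_zero) (by norm_num)
    rw [← Complex.inv_eq_conj habs]
  have hχconj : χ.ringHomComp (starRingEnd ℂ) = χ⁻¹ := by
    rw [hχinv]
    apply MulChar.ext
    intro a
    rw [MulChar.ringHomComp_apply, hχdef, MulChar.ringHomComp_apply]
    have : ((Int.castRingHom ℂ) (quadraticChar (ZMod p) (a : ZMod p)))
        = ((quadraticChar (ZMod p) (a : ZMod p) : ℤ) : ℂ) := by simp
    rw [this]
    exact map_intCast _ _
  have hconj : (starRingEnd ℂ) J = jacobiSum ψ⁻¹ χ⁻¹ := by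
    rw [hJ, ← jacobiSum_ringHomComp, hψconj, hχconj]
  have habsJ : ‖J‖ ^ 2 = (p : ℝ) := by
    have h1 : ((Complex.normSq J : ℝ) : ℂ) = ((p : ℝ) : ℂ) := by
      rw [← Complex.mul_conj, hconj]
      push_cast
      exact hJJ
    rw [Complex.sq_norm]
    exact_mod_cast h1
  have hJ2 : jacobiSum (ψ ^ 2) χ = (starRingEnd ℂ) J := by
    rw [hψ2inv, ← hχinv]
    exact hconj.symm
  have hSsum : S = ψ (-k) * χ k * J + (ψ ^ 2) (-k) * χ k * ((starRingEnd ℂ) J) := by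
    rw [hexpand, hA, key ψ, key (ψ ^ 2), hJ2, zero_add, ← hJ]
  have hnψ : ‖ψ (-k)‖ = 1 :=
    Complex.norm_eq_one_of_pow_eq_one (hψcube _ hnk) (by norm_num)
  have hnψ2 : ‖(ψ ^ 2) (-k)‖ = 1 := by
    rw [MulChar.pow_apply' ψ two_ne_zero, norm_pow, hnψ, one_pow]
  have hnχk : ‖χ k‖ = 1 := by
    apply Complex.norm_eq_one_of_pow_eq_one (n := 2) _ two_ne_zero
    rw [hχdef, MulChar.ringHomComp_apply, ← map_pow, quadraticChar_sq_one hk, map_one]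
  have habsS : ‖S‖ ≤ 2 * ‖J‖ := by
    rw [hSsum]
    refine le_trans (norm_add_le _ _) ?_
    rw [norm_mul, norm_mul, norm_mul, norm_mul, hnψ, hnψ2, hnχk, Complex.norm_conj]
    apply le_of_eq
    ring
  have hTR : |(T : ℝ)| ≤ 2 * ‖J‖ := by
    have h := habsS
    rw [hST] at h
    rwa [Complex.norm_intCast] at h
  have hfin : ((T : ℝ)) ^ 2 ≤ 4 * (p : ℝ) := by
    calc ((T : ℝ)) ^ 2 = |(T : ℝ)| ^ 2 := (sq_abs _).symm
      _ ≤ (2 * ‖J‖) ^ 2 := by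
          apply pow_le_pow_left₀ (abs_nonneg _) hTR
      _ = 4 * (p : ℝ) := by rw [mul_pow, habsJ]; ring
  exact_mod_cast hfin

instance : Fact (Nat.Prime 7) := ⟨by norm_num⟩

lemma EC.sum7_1 : (∑ x : ZMod 7, quadraticChar (ZMod 7) (x ^ 3 + 1)) = 4 := by decide

lemma EC.sum7_2 : (∑ x : ZMod 7, quadraticChar (ZMod 7) (x ^ 3 + 2)) = 1 := by decide

lemma EC.sq7 : ∀ u : ZMod 7, u ^ 2 = 0 ∨ u ^ 2 = 1 ∨ u ^ 2 = 2 ∨ u ^ 2 = 4 := by decide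

/-- Corollary 2.5: if `p > 3` is prime with `p ≡ 1 (mod 3)`, `k ≠ 0`, and the curve
`y² = x³ + k` has a prime number of points over `F_p`, then `k` is neither a square nor a cube
modulo `p`, except when `p = 7` and `k = 4` (in which case the order is `3`). -/
theorem stmt_3 (p : ℕ) (hp : p.Prime) (hp3 : 3 < p) (hpmod : p % 3 = 1)
    (k : ZMod p) (hk : k ≠ 0) (hN : (Npts p k).Prime) :
    (¬(∃ u : ZMod p, u ^ 2 = k) ∧ ¬(∃ u : ZMod p, u ^ 3 = k)) ∨
      (p = 7 ∧ k = (4 : ZMod p) ∧ Npts p k = 3) := by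
  haveI : Fact p.Prime := ⟨hp⟩
  have hformula := EC.npts_formula p hp3 k hk
  have hbound := EC.sum_sq_le p hp3 hpmod k hk
  have hp7 : 7 ≤ p := by
    have h4 : p ≠ 4 := by rintro rfl; norm_num at hp
    omega
  have hpz : (7 : ℤ) ≤ (p : ℤ) := by exact_mod_cast hp7
  have hnocube : ¬ ∃ v : ZMod p, v ^ 3 = k := by
    rintro ⟨v, hv⟩
    have h2 : 2 ∣ Npts p k := EC.two_dvd p hp3 k hk v hv
    have hN2 : Npts p k = 2 := ((Nat.prime_dvd_prime_iff_eq Nat.prime_two hN).mp h2).symm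
    rw [hN2] at hformula
    push_cast at hformula
    have hT : (∑ x : ZMod p, quadraticChar (ZMod p) (x ^ 3 + k)) = 1 - p := by linarith
    rw [hT] at hbound
    nlinarith [hbound, hpz, mul_self_nonneg ((p : ℤ) - 7)]
  by_cases hsq : ∃ u : ZMod p, u ^ 2 = k
  · obtain ⟨u, hu⟩ := hsq
    have h3 : 3 ∣ Npts p k := EC.three_dvd p hp3 k hk u hu
    have hN3 : Npts p k = 3 := ((Nat.prime_dvd_prime_iff_eq Nat.prime_three hN).mp h3).symm
    rw [hN3] at hformula
    push_cast at hformula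
    have hT : (∑ x : ZMod p, quadraticChar (ZMod p) (x ^ 3 + k)) = 2 - p := by linarith
    rw [hT] at hbound
    have hple : (p : ℤ) ≤ 7 := by
      by_contra hgt
      push_neg at hgt
      nlinarith [hbound, mul_self_nonneg ((p : ℤ) - 8)]
    have hp7' : p = 7 := by
      have h7 : (p : ℤ) = 7 := le_antisymm hple hpz
      exact_mod_cast h7
    subst hp7'
    refine Or.inr ⟨rfl, ?_, hN3⟩
    have hk014 : k = 0 ∨ k = 1 ∨ k = 2 ∨ k = 4 := by
      rcases EC.sq7 u with h | h | h | h <;> rw [hu] at h <;> tauto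
    rcases hk014 with rfl | rfl | rfl | rfl
    · exact absurd rfl hk
    · exfalso
      rw [EC.sum7_1] at hT
      norm_num at hT
    · exfalso
      rw [EC.sum7_2] at hT
      norm_num at hT
    · rfl
  · exact Or.inl ⟨hsq, hnocube⟩
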